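/- arXiv:1409.5853 — 2 statements merged into one kernel-verified Lean document; each statement's English description precedes it below -/
import Mathlib

section
/- In the construction of the previous lemma, the Laplacian L(G(X)) is congruent over ℤ to the block-diagonal matrix with blocks L(G₁) and L(G₂) + Σ_{i=1}^{k} E_{Y_i,Y_i}, where E_{Y_i,Y_i} is the matrix with a single 1 in the (Y_i,Y_i) entry. -/
set_option linter.unusedSectionVars false


open Matrix

/-- The graph `G(X)`: disjoint union of `G₁` and `G₂` together with an edge between the
vertex `X` of `G₁` and each of the distinguished vertices `Y₁, …, Y_k` of `G₂`. -/
def glueGraph {V₁ V₂ : Type*} (G₁ : SimpleGraph V₁) (G₂ : SimpleGraph V₂)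
    (X : V₁) {k : ℕ} (Y : Fin k → V₂) : SimpleGraph (V₁ ⊕ V₂) where
  Adj v w :=
    match v, w with
    | Sum.inl a, Sum.inl b => G₁.Adj a b
    | Sum.inr a, Sum.inr b => G₂.Adj a b
    | Sum.inl a, Sum.inr b => a = X ∧ ∃ i, Y i = b
    | Sum.inr a, Sum.inl b => b = X ∧ ∃ i, Y i = a
  symm := ⟨by
    rintro (a | a) (b | b) h
    · exact G₁.adj_symm h
    · exact h
    · exact h
    · exact G₂.adj_symm h⟩
  loopless := ⟨by
    rintro (a | a) h
    · exact G₁.irrefl h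
    · exact G₂.irrefl h⟩

instance glueGraph.adjDecidable {V₁ V₂ : Type*} [DecidableEq V₁] [DecidableEq V₂]
    (G₁ : SimpleGraph V₁) (G₂ : SimpleGraph V₂) (X : V₁) {k : ℕ} (Y : Fin k → V₂)
    [DecidableRel G₁.Adj] [DecidableRel G₂.Adj] :
    DecidableRel (glueGraph G₁ G₂ X Y).Adj := fun v w =>
  match v, w with
  | Sum.inl a, Sum.inl b => inferInstanceAs (Decidable (G₁.Adj a b))
  | Sum.inr a, Sum.inr b => inferInstanceAs (Decidable (G₂.Adj a b))
  | Sum.inl a, Sum.inr b => inferInstanceAs (Decidable (a = X ∧ ∃ i, Y i = b))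
  | Sum.inr a, Sum.inl b => inferInstanceAs (Decidable (b = X ∧ ∃ i, Y i = a))

section Aux

/-- Auxiliary column-operation matrix. -/
def glueE {V₁ V₂ : Type*} [DecidableEq V₁] (X : V₁) : Matrix V₂ V₁ ℤ :=
  Matrix.of fun _ b => if b = X then 1 else 0

@[simp] lemma glueE_apply {V₁ V₂ : Type*} [DecidableEq V₁] (X : V₁) (v : V₂) (a : V₁) :
    glueE X v a = if a = X then 1 else 0 := rfl

variable {V₁ V₂ : Type*} [Fintype V₁] [Fintype V₂] [DecidableEq V₁] [DecidableEq V₂]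
    (G₁ : SimpleGraph V₁) (G₂ : SimpleGraph V₂)
    [DecidableRel G₁.Adj] [DecidableRel G₂.Adj]
    {k : ℕ} (Y : Fin k → V₂) (X : V₁)

@[simp] lemma glue_adj_ll (a b : V₁) :
    (glueGraph G₁ G₂ X Y).Adj (Sum.inl a) (Sum.inl b) ↔ G₁.Adj a b := Iff.rfl

@[simp] lemma glue_adj_rr (a b : V₂) :
    (glueGraph G₁ G₂ X Y).Adj (Sum.inr a) (Sum.inr b) ↔ G₂.Adj a b := Iff.rfl

@[simp] lemma glue_adj_lr (a : V₁) (b : V₂) :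
    (glueGraph G₁ G₂ X Y).Adj (Sum.inl a) (Sum.inr b) ↔ (a = X ∧ ∃ i, Y i = b) := Iff.rfl

@[simp] lemma glue_adj_rl (a : V₂) (b : V₁) :
    (glueGraph G₁ G₂ X Y).Adj (Sum.inr a) (Sum.inl b) ↔ (b = X ∧ ∃ i, Y i = a) := Iff.rfl

lemma sum_ite_adj_int {V : Type*} [Fintype V] (G : SimpleGraph V) [DecidableRel G.Adj] (v : V) :
    ∑ w, (if G.Adj v w then (1 : ℤ) else 0) = G.degree v := by
  classical
  rw [Finset.sum_boole]
  simp [SimpleGraph.degree, SimpleGraph.neighborFinset_eq_filter]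

lemma sum_range_int (hY : Function.Injective Y) :
    ∑ b : V₂, (if ∃ i, Y i = b then (1 : ℤ) else 0) = k := by
  rw [Finset.sum_boole]
  have h : Finset.univ.filter (fun b => ∃ i, Y i = b) = Finset.univ.image Y := by
    ext b; simp
  rw [h, Finset.card_image_of_injective _ hY]
  simp

lemma sum_single_int (hY : Function.Injective Y) (a : V₂) :
    ∑ i : Fin k, (if Y i = a then (1 : ℤ) else 0) = if ∃ i, Y i = a then 1 else 0 := by
  by_cases h : ∃ i, Y i = a
  · obtain ⟨i0, hi0⟩ := h
    have he : ∀ i, (Y i = a) ↔ (i = i0) := by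
      intro i
      constructor
      · intro h'; exact hY (h'.trans hi0.symm)
      · rintro rfl; exact hi0
    simp only [he]
    rw [Finset.sum_ite_eq' Finset.univ i0 (fun _ => (1 : ℤ)), if_pos (Finset.mem_univ i0),
      if_pos ⟨i0, rfl⟩]
  · push_neg at h
    simp [h]

lemma sum_indicX_int (P : Prop) [Decidable P] :
    ∑ a : V₁, (if a = X ∧ P then (1 : ℤ) else 0) = if P then 1 else 0 := by
  by_cases hP : P
  · simp only [hP, and_true]
    rw [Finset.sum_ite_eq' Finset.univ X (fun _ => (1 : ℤ))]
    simp
  · simp [hP]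

lemma lap_apply_int {V : Type*} [Fintype V] [DecidableEq V] (G : SimpleGraph V)
    [DecidableRel G.Adj] (i j : V) :
    G.lapMatrix ℤ i j
      = (if i = j then (G.degree i : ℤ) else 0) - (if G.Adj i j then 1 else 0) := by
  simp [SimpleGraph.lapMatrix, SimpleGraph.degMatrix, SimpleGraph.adjMatrix,
    Matrix.sub_apply, Matrix.diagonal_apply]

lemma glue_degL (hY : Function.Injective Y) (a : V₁) :
    (((glueGraph G₁ G₂ X Y).degree (Sum.inl a) : ℤ))
      = (G₁.degree a : ℤ) + (if a = X then (k : ℤ) else 0) := by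
  rw [← sum_ite_adj_int, Fintype.sum_sum_type]
  simp only [glue_adj_ll, glue_adj_lr]
  rw [sum_ite_adj_int]
  congr 1
  by_cases ha : a = X
  · subst ha
    simp only [eq_self_iff_true, true_and, if_true]
    exact sum_range_int Y hY
  · simp [ha]

lemma glue_degR (b : V₂) :
    (((glueGraph G₁ G₂ X Y).degree (Sum.inr b) : ℤ))
      = (G₂.degree b : ℤ) + (if ∃ i, Y i = b then 1 else 0) := by
  rw [← sum_ite_adj_int, Fintype.sum_sum_type]
  simp only [glue_adj_rr, glue_adj_rl]
  rw [sum_ite_adj_int, sum_indicX_int, add_comm]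

lemma glue_lap_ll (hY : Function.Injective Y) (a b : V₁) :
    (glueGraph G₁ G₂ X Y).lapMatrix ℤ (Sum.inl a) (Sum.inl b)
      = (if a = b then (G₁.degree a : ℤ) + (if a = X then (k : ℤ) else 0) else 0)
        - (if G₁.Adj a b then 1 else 0) := by
  rw [lap_apply_int, glue_degL G₁ G₂ Y X hY]
  simp

lemma glue_lap_lr (a : V₁) (b : V₂) :
    (glueGraph G₁ G₂ X Y).lapMatrix ℤ (Sum.inl a) (Sum.inr b)
      = -(if a = X ∧ ∃ i, Y i = b then 1 else 0) := by
  rw [lap_apply_int]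
  simp

lemma glue_lap_rl (a : V₂) (b : V₁) :
    (glueGraph G₁ G₂ X Y).lapMatrix ℤ (Sum.inr a) (Sum.inl b)
      = -(if b = X ∧ ∃ i, Y i = a then 1 else 0) := by
  rw [lap_apply_int]
  simp

lemma glue_lap_rr (a b : V₂) :
    (glueGraph G₁ G₂ X Y).lapMatrix ℤ (Sum.inr a) (Sum.inr b)
      = (if a = b then (G₂.degree a : ℤ) + (if ∃ i, Y i = a then 1 else 0) else 0)
        - (if G₂.Adj a b then 1 else 0) := by
  rw [lap_apply_int, glue_degR G₁ G₂ Y X]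
  simp

lemma glue_rowsum₂ (a : V₂) :
    ∑ v, (glueGraph G₁ G₂ X Y).lapMatrix ℤ (Sum.inr a) (Sum.inr v)
      = if ∃ i, Y i = a then 1 else 0 := by
  simp only [glue_lap_rr, Finset.sum_sub_distrib]
  rw [Finset.sum_ite_eq Finset.univ a
    (fun _ => (G₂.degree a : ℤ) + (if ∃ i, Y i = a then 1 else 0)), sum_ite_adj_int]
  simp

lemma glue_colsum₂ (b : V₂) :
    ∑ v, (glueGraph G₁ G₂ X Y).lapMatrix ℤ (Sum.inr v) (Sum.inr b)
      = if ∃ i, Y i = b then 1 else 0 := by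
  have h : ∀ v, (glueGraph G₁ G₂ X Y).lapMatrix ℤ (Sum.inr v) (Sum.inr b)
      = (glueGraph G₁ G₂ X Y).lapMatrix ℤ (Sum.inr b) (Sum.inr v) := by
    intro v
    rw [glue_lap_rr, glue_lap_rr]
    by_cases hvb : v = b
    · subst hvb; simp
    · simp [hvb, Ne.symm hvb, G₂.adj_comm]
  simp only [h]
  exact glue_rowsum₂ G₁ G₂ Y X b

end Aux
/-- The Laplacian of `G(X)` is congruent over `ℤ` to the block-diagonal matrix with blocks
`L(G₁)` and `L(G₂) + Σᵢ E_{Yᵢ,Yᵢ}`. -/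
theorem stmt_7 {V₁ V₂ : Type*} [Fintype V₁] [Fintype V₂] [DecidableEq V₁] [DecidableEq V₂]
    (G₁ : SimpleGraph V₁) (G₂ : SimpleGraph V₂)
    [DecidableRel G₁.Adj] [DecidableRel G₂.Adj]
    {k : ℕ} (Y : Fin k → V₂) (hY : Function.Injective Y) (X : V₁) :
    ∃ T : Matrix (V₁ ⊕ V₂) (V₁ ⊕ V₂) ℤ, IsUnit T.det ∧
      Tᵀ * (glueGraph G₁ G₂ X Y).lapMatrix ℤ * T =
        Matrix.fromBlocks (G₁.lapMatrix ℤ) 0 0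
          (G₂.lapMatrix ℤ + ∑ i, Matrix.single (Y i) (Y i) 1) := by
  classical
  refine ⟨Matrix.fromBlocks 1 0 (glueE X) 1, ?_, ?_⟩
  · rw [Matrix.det_fromBlocks_zero₁₂, Matrix.det_one, Matrix.det_one, one_mul]
    exact isUnit_one
  · set L := (glueGraph G₁ G₂ X Y).lapMatrix ℤ with hLdef
    have hLB : L = Matrix.fromBlocks L.toBlocks₁₁ L.toBlocks₁₂ L.toBlocks₂₁ L.toBlocks₂₂ :=
      (Matrix.fromBlocks_toBlocks L).symm
    have h12 : L.toBlocks₁₂ + (glueE (V₂ := V₂) X)ᵀ * L.toBlocks₂₂ = 0 := by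
      ext a b
      simp only [Matrix.add_apply, Matrix.mul_apply, Matrix.transpose_apply,
        Matrix.toBlocks₁₂, Matrix.toBlocks₂₂, Matrix.of_apply, Matrix.zero_apply,
        glueE_apply, hLdef]
      rw [glue_lap_lr G₁ G₂ Y X]
      by_cases ha : a = X
      · simp only [ha, eq_self_iff_true, if_true, one_mul, true_and]
        rw [glue_colsum₂ G₁ G₂ Y X b]
        ring
      · simp [ha]
    have h21 : L.toBlocks₂₁ + L.toBlocks₂₂ * glueE (V₂ := V₂) X = 0 := by
      ext a b
      simp only [Matrix.add_apply, Matrix.mul_apply, Matrix.toBlocks₂₁, Matrix.toBlocks₂₂,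
        Matrix.of_apply, Matrix.zero_apply, glueE_apply, hLdef]
      rw [glue_lap_rl G₁ G₂ Y X]
      by_cases hb : b = X
      · simp only [hb, eq_self_iff_true, if_true, mul_one, true_and]
        rw [glue_rowsum₂ G₁ G₂ Y X a]
        ring
      · simp [hb]
    have hD : L.toBlocks₂₂ = G₂.lapMatrix ℤ + ∑ i, Matrix.single (Y i) (Y i) (1 : ℤ) := by
      ext a b
      simp only [Matrix.toBlocks₂₂, Matrix.of_apply, Matrix.add_apply, Matrix.sum_apply,
        Matrix.single_apply, hLdef]
      rw [glue_lap_rr G₁ G₂ Y X, lap_apply_int]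
      by_cases hab : a = b
      · subst hab
        simp only [eq_self_iff_true, if_true, and_self]
        rw [sum_single_int Y hY a]
        ring
      · have hne : ∀ i : Fin k, ¬(Y i = a ∧ Y i = b) := by
          rintro i ⟨h1, h2⟩
          exact hab (h1 ▸ h2 ▸ rfl)
        simp [hab, hne]
    have hsum : ∀ b : V₁, ∑ v, (glueGraph G₁ G₂ X Y).lapMatrix ℤ (Sum.inr v) (Sum.inl b)
        = -(if b = X then (k : ℤ) else 0) := by
      intro b
      simp only [glue_lap_rl G₁ G₂ Y X]
      by_cases hb : b = X
      · simp only [hb, eq_self_iff_true, true_and, if_true]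
        rw [Finset.sum_neg_distrib, sum_range_int Y hY]
      · simp [hb]
    have hA : L.toBlocks₁₁ + (glueE (V₂ := V₂) X)ᵀ * L.toBlocks₂₁ = G₁.lapMatrix ℤ := by
      ext a b
      simp only [Matrix.add_apply, Matrix.mul_apply, Matrix.transpose_apply,
        Matrix.toBlocks₁₁, Matrix.toBlocks₂₁, Matrix.of_apply, glueE_apply, hLdef]
      rw [glue_lap_ll G₁ G₂ Y X hY, lap_apply_int]
      by_cases ha : a = X
      · simp only [ha, eq_self_iff_true, if_true, one_mul]
        rw [hsum b]
        by_cases hb : b = X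
        · subst hb
          simp
        · simp [hb, Ne.symm hb]
      · simp [ha]
    rw [hLB, Matrix.fromBlocks_transpose, Matrix.transpose_one, Matrix.transpose_zero,
      Matrix.fromBlocks_multiply, Matrix.fromBlocks_multiply]
    simp only [Matrix.transpose_one, Matrix.one_mul, Matrix.mul_one, Matrix.zero_mul,
      Matrix.mul_zero, add_zero, zero_add]
    rw [h12, Matrix.zero_mul, add_zero, h21, hA, hD]
end

section
/- Declare two finite graphs equivalent if the quadratic forms represented by their combinatorial Laplacians are equivalent over ℤ. Then the wedge sum of graphs descends to a well-defined binary operation on equivalence classes: if G₁ is equivalent to H₁, then for any choices of wedge vertices, G₁ ∨ G₂ is equivalent to H₁ ∨ G₂. -/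
open Matrix

/-- The wedge sum `G₁ ∨_{X,Y} G₂`: the quotient of the disjoint union of `G₁` and `G₂`
identifying the vertex `X` of `G₁` with the vertex `Y` of `G₂` (modelled on the vertex set
`V₁ ⊕ {v : V₂ // v ≠ Y}`, with `X` playing the role of the identified vertex). -/
def wedgeGraph {V₁ V₂ : Type*} (G₁ : SimpleGraph V₁) (G₂ : SimpleGraph V₂)
    (X : V₁) (Y : V₂) : SimpleGraph (V₁ ⊕ {v : V₂ // v ≠ Y}) where
  Adj v w :=
    match v, w with
    | Sum.inl a, Sum.inl b => G₁.Adj a b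
    | Sum.inr a, Sum.inr b => G₂.Adj a b
    | Sum.inl a, Sum.inr b => a = X ∧ G₂.Adj Y b
    | Sum.inr a, Sum.inl b => b = X ∧ G₂.Adj Y a
  symm := by
    constructor
    rintro (a | a) (b | b) h
    · exact G₁.adj_symm h
    · exact h
    · exact h
    · exact G₂.adj_symm h
  loopless := by
    constructor
    rintro (a | a) h
    · exact G₁.irrefl h
    · exact G₂.irrefl h

instance wedgeGraph.adjDecidable {V₁ V₂ : Type*} [DecidableEq V₁] [DecidableEq V₂]
    (G₁ : SimpleGraph V₁) (G₂ : SimpleGraph V₂) (X : V₁) (Y : V₂)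
    [DecidableRel G₁.Adj] [DecidableRel G₂.Adj] :
    DecidableRel (wedgeGraph G₁ G₂ X Y).Adj := fun v w =>
  match v, w with
  | Sum.inl a, Sum.inl b => inferInstanceAs (Decidable (G₁.Adj a b))
  | Sum.inr a, Sum.inr b => inferInstanceAs (Decidable (G₂.Adj a.1 b.1))
  | Sum.inl a, Sum.inr b => inferInstanceAs (Decidable (a = X ∧ G₂.Adj Y b.1))
  | Sum.inr a, Sum.inl b => inferInstanceAs (Decidable (b = X ∧ G₂.Adj Y a.1))

set_option linter.unusedSectionVars false

section aux
variable {V : Type*} [Fintype V] [DecidableEq V]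

lemma sum_subtype_ne (Y : V) (f : V → ℤ) :
    ∑ v : {v : V // v ≠ Y}, f ↑v = (∑ v, f v) - f Y := by
  rw [← Finset.sum_erase_eq_sub (Finset.mem_univ Y)]
  exact (Finset.sum_subtype _ (fun x => by simp) f).symm

lemma lap_rowsum (G : SimpleGraph V) [DecidableRel G.Adj] (v : V) :
    ∑ w, G.lapMatrix ℤ v w = 0 := by
  have := congrFun (G.lapMatrix_mulVec_const_eq_zero (R := ℤ)) v
  simpa [Matrix.mulVec, dotProduct] using this

lemma lap_colsum (G : SimpleGraph V) [DecidableRel G.Adj] (w : V) :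
    ∑ v, G.lapMatrix ℤ v w = 0 := by
  have h := lap_rowsum G w
  rw [← h]
  exact Finset.sum_congr rfl fun v _ =>
    (congrFun (congrFun (G.isSymm_lapMatrix (R := ℤ)) w) v)

lemma lap_apply (G : SimpleGraph V) [DecidableRel G.Adj] (i j : V) :
    G.lapMatrix ℤ i j = (if i = j then (G.degree i : ℤ) else 0)
      - (if G.Adj i j then 1 else 0) := by
  simp [SimpleGraph.lapMatrix, SimpleGraph.degMatrix, Matrix.diagonal_apply]

lemma degree_eq_sum (G : SimpleGraph V) [DecidableRel G.Adj] (v : V) :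
    (G.degree v : ℤ) = ∑ w, if G.Adj v w then 1 else 0 := by
  rw [SimpleGraph.degree, SimpleGraph.neighborFinset_eq_filter, Finset.card_filter]
  push_cast
  exact Finset.sum_congr rfl (by simp)

end aux

section wedge
variable {V₁ V₂ : Type*} [Fintype V₁] [Fintype V₂] [DecidableEq V₁] [DecidableEq V₂]
  (G₁ : SimpleGraph V₁) (G₂ : SimpleGraph V₂) [DecidableRel G₁.Adj] [DecidableRel G₂.Adj]
  (X : V₁) (Y : V₂)

@[simp] lemma wedge_adj_ll (a b : V₁) :
    (wedgeGraph G₁ G₂ X Y).Adj (.inl a) (.inl b) ↔ G₁.Adj a b := Iff.rfl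
@[simp] lemma wedge_adj_lr (a : V₁) (w : {v : V₂ // v ≠ Y}) :
    (wedgeGraph G₁ G₂ X Y).Adj (.inl a) (.inr w) ↔ a = X ∧ G₂.Adj Y ↑w := Iff.rfl
@[simp] lemma wedge_adj_rl (v : {v : V₂ // v ≠ Y}) (b : V₁) :
    (wedgeGraph G₁ G₂ X Y).Adj (.inr v) (.inl b) ↔ b = X ∧ G₂.Adj Y ↑v := Iff.rfl
@[simp] lemma wedge_adj_rr (v w : {v : V₂ // v ≠ Y}) :
    (wedgeGraph G₁ G₂ X Y).Adj (.inr v) (.inr w) ↔ G₂.Adj ↑v ↑w := Iff.rfl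

lemma wedge_degree_inl (a : V₁) :
    ((wedgeGraph G₁ G₂ X Y).degree (Sum.inl a) : ℤ)
      = (G₁.degree a : ℤ) + if a = X then (G₂.degree Y : ℤ) else 0 := by
  rw [degree_eq_sum, Fintype.sum_sum_type]
  congr 1
  · rw [degree_eq_sum]; rfl
  · simp only [wedge_adj_lr]
    by_cases h : a = X
    · subst h
      simp only [true_and]
      rw [sum_subtype_ne Y (fun w => if G₂.Adj Y w then (1:ℤ) else 0), degree_eq_sum]
      simp
    · simp [h]

lemma wedge_degree_inr (v : {v : V₂ // v ≠ Y}) :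
    ((wedgeGraph G₁ G₂ X Y).degree (Sum.inr v) : ℤ) = (G₂.degree ↑v : ℤ) := by
  rw [degree_eq_sum, Fintype.sum_sum_type]
  simp only [wedge_adj_rl, wedge_adj_rr]
  rw [sum_subtype_ne Y (fun w => if G₂.Adj ↑v w then (1:ℤ) else 0), degree_eq_sum]
  have h1 : ∑ b : V₁, (if b = X ∧ G₂.Adj Y ↑v then (1:ℤ) else 0)
      = if G₂.Adj Y ↑v then 1 else 0 := by
    simp [Finset.sum_ite_eq', ite_and]
  rw [h1]
  have : (if G₂.Adj ↑v Y then (1:ℤ) else 0) = if G₂.Adj Y ↑v then 1 else 0 := by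
    simp [SimpleGraph.adj_comm]
  rw [this]
  ring
end wedge

section blocks
variable {V₁ V₂ : Type*} [Fintype V₁] [Fintype V₂] [DecidableEq V₁] [DecidableEq V₂]
  (G₁ : SimpleGraph V₁) (G₂ : SimpleGraph V₂) [DecidableRel G₁.Adj] [DecidableRel G₂.Adj]
  (X : V₁) (Y : V₂)

def Bmat (X : V₁) (Y : V₂) : Matrix {v : V₂ // v ≠ Y} V₁ ℤ :=
  Matrix.of fun _ a => if a = X then -1 else 0

def Smat (X : V₁) (Y : V₂) : Matrix (V₁ ⊕ {v : V₂ // v ≠ Y}) (V₁ ⊕ {v : V₂ // v ≠ Y}) ℤ :=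
  Matrix.fromBlocks 1 0 (Bmat X Y) 1

def Smati (X : V₁) (Y : V₂) : Matrix (V₁ ⊕ {v : V₂ // v ≠ Y}) (V₁ ⊕ {v : V₂ // v ≠ Y}) ℤ :=
  Matrix.fromBlocks 1 0 (-(Bmat X Y)) 1

lemma Smat_mul_Smati : Smat X Y * Smati (V₂ := V₂) X Y = 1 := by
  rw [Smat, Smati, Matrix.fromBlocks_multiply]
  simp [← Matrix.fromBlocks_one]

lemma Smati_mul_Smat : Smati X Y * Smat (V₂ := V₂) X Y = 1 := by
  rw [Smat, Smati, Matrix.fromBlocks_multiply]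
  simp [← Matrix.fromBlocks_one]

def Kmat (G₂ : SimpleGraph V₂) [DecidableRel G₂.Adj] (Y : V₂) :
    Matrix {v : V₂ // v ≠ Y} {v : V₂ // v ≠ Y} ℤ :=
  (G₂.lapMatrix ℤ).submatrix Subtype.val Subtype.val

lemma KB_apply (v : {v : V₂ // v ≠ Y}) (a : V₁) :
    (Kmat G₂ Y * Bmat X Y) v a = if a = X then G₂.lapMatrix ℤ ↑v Y else 0 := by
  rw [Matrix.mul_apply]
  simp only [Kmat, Bmat, Matrix.submatrix_apply, Matrix.of_apply, mul_ite, mul_neg, mul_one,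
    mul_zero]
  rw [Finset.sum_ite_irrel]
  by_cases h : a = X <;> simp only [h, if_true, if_false, Finset.sum_const_zero]
  rw [Finset.sum_neg_distrib, sum_subtype_ne Y (fun w => G₂.lapMatrix ℤ ↑v w), lap_rowsum]
  ring

lemma BK_apply (a : V₁) (v : {v : V₂ // v ≠ Y}) :
    ((Bmat X Y)ᵀ * Kmat G₂ Y) a v = if a = X then G₂.lapMatrix ℤ Y ↑v else 0 := by
  rw [Matrix.mul_apply]
  simp only [Kmat, Bmat, Matrix.transpose_apply, Matrix.submatrix_apply, Matrix.of_apply, ite_mul,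
    neg_mul, one_mul, zero_mul]
  rw [Finset.sum_ite_irrel]
  by_cases h : a = X <;> simp only [h, if_true, if_false, Finset.sum_const_zero]
  rw [Finset.sum_neg_distrib, sum_subtype_ne Y (fun w => G₂.lapMatrix ℤ w ↑v), lap_colsum]
  ring

lemma BKB_apply (a b : V₁) :
    ((Bmat X Y)ᵀ * Kmat G₂ Y * Bmat X Y) a b
      = if a = X ∧ b = X then (G₂.degree Y : ℤ) else 0 := by
  rw [Matrix.mul_apply]
  have h1 : ∀ x : {v : V₂ // v ≠ Y}, ((Bmat X Y)ᵀ * Kmat G₂ Y) a x * Bmat X Y x b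
      = if a = X ∧ b = X then -(G₂.lapMatrix ℤ Y ↑x) else 0 := by
    intro x
    rw [BK_apply]
    simp only [Bmat, Matrix.of_apply, ite_and]
    by_cases ha : a = X <;> by_cases hb : b = X <;> simp [ha, hb]
  rw [Finset.sum_congr rfl (fun x _ => h1 x)]
  by_cases h : a = X ∧ b = X
  · simp only [if_pos h]
    rw [Finset.sum_neg_distrib, sum_subtype_ne Y (fun w => G₂.lapMatrix ℤ Y w), lap_rowsum,
      lap_apply]
    simp
  · simp [h]

lemma wedge_block :
    (wedgeGraph G₁ G₂ X Y).lapMatrix ℤ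
      = (Smat X Y)ᵀ * Matrix.fromBlocks (G₁.lapMatrix ℤ) 0 0 (Kmat G₂ Y) * Smat X Y := by
  rw [Smat, Matrix.fromBlocks_transpose, Matrix.fromBlocks_multiply, Matrix.fromBlocks_multiply]
  simp only [Matrix.one_mul, Matrix.mul_one, Matrix.mul_zero, Matrix.zero_mul, zero_add,
    add_zero, Matrix.transpose_one, Matrix.transpose_zero]
  ext i j
  rcases i with a | v <;> rcases j with b | w
  · simp only [Matrix.fromBlocks_apply₁₁, Matrix.add_apply]
    rw [lap_apply, lap_apply, wedge_degree_inl, BKB_apply]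
    simp only [Sum.inl.injEq, wedge_adj_ll]
    by_cases hab : a = b
    · subst hab
      by_cases ha : a = X <;> simp [ha]
    · have : ¬(a = X ∧ b = X) := fun ⟨h1, h2⟩ => hab (h1.trans h2.symm)
      simp only [hab, this, if_false]
      ring
  · simp only [Matrix.fromBlocks_apply₁₂]
    rw [lap_apply, BK_apply, lap_apply]
    have hne : (Sum.inl a : V₁ ⊕ {v : V₂ // v ≠ Y}) ≠ Sum.inr w := by simp
    simp only [hne, if_false, wedge_adj_lr, zero_sub]
    have hYw : Y ≠ ↑w := fun h => w.2 h.symm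
    by_cases ha : a = X <;> simp [ha, hYw, ite_and]
  · simp only [Matrix.fromBlocks_apply₂₁]
    rw [lap_apply, KB_apply, lap_apply]
    have hne : (Sum.inr v : V₁ ⊕ {v : V₂ // v ≠ Y}) ≠ Sum.inl b := by simp
    simp only [hne, if_false, wedge_adj_rl, zero_sub]
    have hvY : (↑v : V₂) ≠ Y := v.2
    by_cases hb : b = X <;> simp [hb, hvY, ite_and, SimpleGraph.adj_comm]
  · simp only [Matrix.fromBlocks_apply₂₂, Kmat, Matrix.submatrix_apply]
    rw [lap_apply, lap_apply, wedge_degree_inr]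
    simp only [Sum.inr.injEq, wedge_adj_rr, Subtype.ext_iff]
end blocks

section qsec
variable {V₂ : Type*} [Fintype V₂] [DecidableEq V₂] (G₂ : SimpleGraph V₂) [DecidableRel G₂.Adj]
  (Y Y' : V₂)

def e2 (Y Y' : V₂) : {v : V₂ // v ≠ Y} ≃ {v : V₂ // v ≠ Y'} :=
  Equiv.subtypeEquiv (Equiv.swap Y Y') fun v => by
    rw [ne_eq, ne_eq, not_iff_not, Equiv.swap_apply_eq_iff, Equiv.swap_apply_right]

@[simp] lemma e2_symm_coe (v : {v : V₂ // v ≠ Y'}) :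
    ((e2 Y Y').symm v : V₂) = Equiv.swap Y Y' ↑v := by
  simp [e2, Equiv.subtypeEquiv_symm, Equiv.symm_swap]

def Qmat (Y Y' : V₂) : Matrix {v : V₂ // v ≠ Y'} {v : V₂ // v ≠ Y'} ℤ :=
  Matrix.of fun u v =>
    (if Equiv.swap Y Y' ↑u = ↑v then 1 else 0) - (if Y = ↑v then 1 else 0)

lemma split_ite (A B : Prop) [Decidable A] [Decidable B] (c : ℤ) :
    ((if A then (1:ℤ) else 0) - (if B then 1 else 0)) * c
      = (if A then c else 0) - (if B then c else 0) := by
  by_cases hA : A <;> by_cases hB : B <;> simp [hA, hB]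

lemma Qmat_mul_Qmat : Qmat Y Y' * Qmat Y Y' = 1 := by
  ext u w
  rw [Matrix.mul_apply]
  simp only [Qmat, Matrix.of_apply]
  rw [sum_subtype_ne Y' (fun x =>
    ((if Equiv.swap Y Y' ↑u = x then 1 else 0) - (if Y = x then 1 else 0)) *
    ((if Equiv.swap Y Y' x = ↑w then 1 else 0) - (if Y = ↑w then 1 else 0)))]
  have hw : Y' ≠ (↑w : V₂) := fun h => w.2 h.symm
  simp only [split_ite]
  rw [Finset.sum_sub_distrib, Finset.sum_ite_eq, Finset.sum_ite_eq]
  simp only [Finset.mem_univ, if_true, Equiv.swap_apply_self, Equiv.swap_apply_left,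
    Equiv.swap_apply_right, hw, if_false]
  rw [Matrix.one_apply]
  have : ((↑u : V₂) = ↑w) ↔ (u = w) := by simp [Subtype.ext_iff]
  rw [if_congr this rfl rfl]
  ring_nf
  simp

end qsec

section qcongr
variable {V₂ : Type*} [Fintype V₂] [DecidableEq V₂] (G₂ : SimpleGraph V₂) [DecidableRel G₂.Adj]
  (Y Y' : V₂)

lemma key_sum (c : V₂) (g : V₂ → ℤ) (hg : ∑ x, g x = 0) :
    ∑ v' : {v : V₂ // v ≠ Y'},
      ((if Equiv.swap Y Y' ↑v' = c then 1 else 0) - (if Y = c then 1 else 0))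
        * g (Equiv.swap Y Y' ↑v') = g c := by
  rw [sum_subtype_ne Y' (fun x =>
    ((if Equiv.swap Y Y' x = c then 1 else 0) - (if Y = c then 1 else 0)) * g (Equiv.swap Y Y' x))]
  have h1 : ∑ x : V₂,
      ((if Equiv.swap Y Y' x = c then (1:ℤ) else 0) - (if Y = c then 1 else 0))
        * g (Equiv.swap Y Y' x)
      = ∑ x : V₂, ((if x = c then (1:ℤ) else 0) - (if Y = c then 1 else 0)) * g x :=
    Fintype.sum_equiv (Equiv.swap Y Y')
      (fun x => ((if Equiv.swap Y Y' x = c then (1:ℤ) else 0) - (if Y = c then 1 else 0))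
        * g (Equiv.swap Y Y' x))
      (fun x => ((if x = c then (1:ℤ) else 0) - (if Y = c then 1 else 0)) * g x)
      (fun x => rfl)
  rw [h1]
  simp only [split_ite]
  rw [Finset.sum_sub_distrib, Finset.sum_ite_eq', Finset.sum_ite_irrel, Finset.sum_const_zero, hg]
  simp [Equiv.swap_apply_right]

lemma key_sum' (c : V₂) (g : V₂ → ℤ) (hg : ∑ x, g x = 0) :
    ∑ v' : {v : V₂ // v ≠ Y'},
      g (Equiv.swap Y Y' ↑v')
        * ((if Equiv.swap Y Y' ↑v' = c then 1 else 0) - (if Y = c then 1 else 0)) = g c := by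
  rw [← key_sum Y Y' c g hg]
  exact Finset.sum_congr rfl fun v' _ => mul_comm _ _

lemma Q_congr :
    (Qmat Y Y')ᵀ * (Matrix.reindex (e2 Y Y') (e2 Y Y') (Kmat G₂ Y)) * Qmat Y Y'
      = Kmat G₂ Y' := by
  ext v w
  rw [Matrix.mul_apply]
  have inner : ∀ w' : {v : V₂ // v ≠ Y'},
      ((Qmat Y Y')ᵀ * (Matrix.reindex (e2 Y Y') (e2 Y Y') (Kmat G₂ Y))) v w'
        = G₂.lapMatrix ℤ ↑v (Equiv.swap Y Y' ↑w') := by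
    intro w'
    rw [Matrix.mul_apply]
    have h : ∀ v' : {v : V₂ // v ≠ Y'},
        (Qmat Y Y')ᵀ v v' * (Matrix.reindex (e2 Y Y') (e2 Y Y') (Kmat G₂ Y)) v' w'
          = ((if Equiv.swap Y Y' ↑v' = ↑v then 1 else 0) - (if Y = ↑v then 1 else 0))
            * G₂.lapMatrix ℤ (Equiv.swap Y Y' ↑v') (Equiv.swap Y Y' ↑w') := by
      intro v'
      simp [Qmat, Kmat, Matrix.reindex_apply, Matrix.submatrix_apply]
    rw [Finset.sum_congr rfl fun v' _ => h v']
    exact key_sum Y Y' ↑v (fun x => G₂.lapMatrix ℤ x (Equiv.swap Y Y' ↑w'))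
      (lap_colsum G₂ _)
  rw [Finset.sum_congr rfl fun w' _ => by rw [inner w']]
  have : ∀ w' : {v : V₂ // v ≠ Y'},
      G₂.lapMatrix ℤ ↑v (Equiv.swap Y Y' ↑w') * Qmat Y Y' w' w
        = G₂.lapMatrix ℤ ↑v (Equiv.swap Y Y' ↑w')
          * ((if Equiv.swap Y Y' ↑w' = ↑w then 1 else 0) - (if Y = ↑w then 1 else 0)) := by
    intro w'; rfl
  rw [Finset.sum_congr rfl fun w' _ => this w']
  rw [key_sum' Y Y' ↑w (fun x => G₂.lapMatrix ℤ ↑v x) (lap_rowsum G₂ _)]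
  rfl

end qcongr

/-- The wedge sum descends to a well-defined operation on equivalence classes of graphs
under equivalence of Laplacian quadratic forms over `ℤ`: if `G₁` is equivalent to `H₁`,
then for any choices of wedge vertices `G₁ ∨ G₂` is equivalent to `H₁ ∨ G₂`. -/
theorem stmt_9 {V₁ V₂ : Type*} [Fintype V₁] [Fintype V₂] [DecidableEq V₁] [DecidableEq V₂]
    (G₁ H₁ : SimpleGraph V₁) (G₂ : SimpleGraph V₂)
    [DecidableRel G₁.Adj] [DecidableRel H₁.Adj] [DecidableRel G₂.Adj]
    (hequiv : ∃ P : Matrix V₁ V₁ ℤ, IsUnit P.det ∧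
      Pᵀ * G₁.lapMatrix ℤ * P = H₁.lapMatrix ℤ)
    (X X' : V₁) (Y Y' : V₂) :
    ∃ e : (V₁ ⊕ {v : V₂ // v ≠ Y}) ≃ (V₁ ⊕ {v : V₂ // v ≠ Y'}),
      ∃ T : Matrix (V₁ ⊕ {v : V₂ // v ≠ Y'}) (V₁ ⊕ {v : V₂ // v ≠ Y'}) ℤ,
        IsUnit T.det ∧
        Tᵀ * (Matrix.reindex e e ((wedgeGraph G₁ G₂ X Y).lapMatrix ℤ)) * T =
          (wedgeGraph H₁ G₂ X' Y').lapMatrix ℤ := by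
  obtain ⟨P, hP, hPL⟩ := hequiv
  set e : (V₁ ⊕ {v : V₂ // v ≠ Y}) ≃ (V₁ ⊕ {v : V₂ // v ≠ Y'}) :=
    Equiv.sumCongr (Equiv.refl V₁) (e2 Y Y') with he
  refine ⟨e, ?_⟩
  set R : Matrix (V₁ ⊕ {v : V₂ // v ≠ Y'}) (V₁ ⊕ {v : V₂ // v ≠ Y'}) ℤ :=
    Matrix.fromBlocks P 0 0 (Qmat Y Y') with hR
  set S' : Matrix (V₁ ⊕ {v : V₂ // v ≠ Y'}) (V₁ ⊕ {v : V₂ // v ≠ Y'}) ℤ := Smat X' Y' with hS'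
  set St : Matrix (V₁ ⊕ {v : V₂ // v ≠ Y'}) (V₁ ⊕ {v : V₂ // v ≠ Y'}) ℤ :=
    Matrix.reindex e e (Smat X Y) with hSt
  set Sti : Matrix (V₁ ⊕ {v : V₂ // v ≠ Y'}) (V₁ ⊕ {v : V₂ // v ≠ Y'}) ℤ :=
    Matrix.reindex e e (Smati X Y) with hSti
  have hreindex_mul : ∀ (A B : Matrix (V₁ ⊕ {v : V₂ // v ≠ Y}) (V₁ ⊕ {v : V₂ // v ≠ Y}) ℤ),
      Matrix.reindex e e (A * B) = Matrix.reindex e e A * Matrix.reindex e e B := by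
    intro A B
    simp only [Matrix.reindex_apply]
    rw [Matrix.submatrix_mul_equiv]
  have hStSti : St * Sti = 1 := by
    rw [hSt, hSti, ← hreindex_mul, Smat_mul_Smati]
    simp
  have hStiSt : Sti * St = 1 := by
    rw [hSt, hSti, ← hreindex_mul, Smati_mul_Smat]
    simp
  have hS'S'i : S' * Smati X' Y' = 1 := Smat_mul_Smati X' Y'
  refine ⟨Sti * R * S', ?_, ?_⟩
  · rw [Matrix.det_mul, Matrix.det_mul]
    have h1 : IsUnit Sti.det := by
      refine IsUnit.of_mul_eq_one St.det ?_
      rw [← Matrix.det_mul, hStiSt, Matrix.det_one]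
    have h2 : IsUnit R.det := by
      rw [hR, Matrix.det_fromBlocks_zero₂₁]
      refine (hP.mul ?_)
      refine IsUnit.of_mul_eq_one (Qmat Y Y').det ?_
      rw [← Matrix.det_mul, Qmat_mul_Qmat, Matrix.det_one]
    have h3 : IsUnit S'.det := by
      refine IsUnit.of_mul_eq_one (Smati X' Y').det ?_
      rw [← Matrix.det_mul, hS'S'i, Matrix.det_one]
    exact (h1.mul h2).mul h3
  · set Kt : Matrix {v : V₂ // v ≠ Y'} {v : V₂ // v ≠ Y'} ℤ :=
      Matrix.reindex (e2 Y Y') (e2 Y Y') (Kmat G₂ Y) with hKt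
    set Dt : Matrix (V₁ ⊕ {v : V₂ // v ≠ Y'}) (V₁ ⊕ {v : V₂ // v ≠ Y'}) ℤ :=
      Matrix.fromBlocks (G₁.lapMatrix ℤ) 0 0 Kt with hDt
    have hD : Matrix.reindex e e
        (Matrix.fromBlocks (G₁.lapMatrix ℤ) 0 0 (Kmat G₂ Y)) = Dt := by
      ext i j
      rcases i with a | v <;> rcases j with b | w <;>
        simp [hDt, hKt, Matrix.reindex_apply, Matrix.submatrix_apply, he]
    have hre : Matrix.reindex e e ((wedgeGraph G₁ G₂ X Y).lapMatrix ℤ) = Stᵀ * Dt * St := by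
      rw [wedge_block, hreindex_mul, hreindex_mul, hD, hSt, ← Matrix.transpose_reindex]
    have hmid : Rᵀ * Dt * R = Matrix.fromBlocks (H₁.lapMatrix ℤ) 0 0 (Kmat G₂ Y') := by
      rw [hR, hDt, Matrix.fromBlocks_transpose, Matrix.fromBlocks_multiply,
        Matrix.fromBlocks_multiply]
      simp only [Matrix.mul_zero, Matrix.zero_mul, Matrix.mul_one, Matrix.one_mul, zero_add,
        add_zero, Matrix.transpose_zero]
      rw [← hPL, ← Q_congr G₂ Y Y']
    rw [hre, wedge_block H₁ G₂ X' Y', ← hmid, ← hS']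
    have h1 : Stiᵀ * Stᵀ = 1 := by rw [← Matrix.transpose_mul, hStSti, Matrix.transpose_one]
    simp only [Matrix.transpose_mul, Matrix.mul_assoc]
    rw [← Matrix.mul_assoc St Sti (R * S'), hStSti, Matrix.one_mul,
      ← Matrix.mul_assoc Stiᵀ Stᵀ _, h1, Matrix.one_mul]
end
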